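/- Let μ ∈ ℝ satisfy Δ(μ)² = 1 and φ_q(μ) = 0 (a Dirichlet eigenvalue lying at a band edge). Then J_1(μ) = (θ_{q+1}(μ)/a⁰_0)·Σ_{k=1}^{p} v_k·φ_k(μ)², where J_1(λ) = −(1/a⁰_0)·Σ_{k=0}^{p} v_k·(φ_q(λ)θ_k(λ)² + 2φ̂(λ)θ_k(λ)φ_k(λ) − θ_{q+1}(λ)φ_k(λ)²). -/

import Mathlib

open Polynomial Asymptotics Filter

theorem stmt18
    (q : ℕ) (hq : 1 ≤ q)
    (a b : ℤ → ℝ)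
    (ha_per : ∀ n : ℤ, a (n + (q : ℤ)) = a n)
    (hb_per : ∀ n : ℤ, b (n + (q : ℤ)) = b n)
    (ha_pos : ∀ n : ℤ, 0 < a n)
    (θ φ : ℤ → Polynomial ℝ)
    (hθ_rec : ∀ n : ℤ,
      C (a (n - 1)) * θ (n - 1) + C (a n) * θ (n + 1) + C (b n) * θ n = X * θ n)
    (hφ_rec : ∀ n : ℤ,
      C (a (n - 1)) * φ (n - 1) + C (a n) * φ (n + 1) + C (b n) * φ n = X * φ n)
    (hθ0 : θ 0 = 1) (hθ1 : θ 1 = 0) (hφ0 : φ 0 = 0) (hφ1 : φ 1 = 1)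
    (Δl : Polynomial ℝ) (hΔl : Δl = C ((2:ℝ)⁻¹) * (φ ((q:ℤ) + 1) + θ (q:ℤ)))
    (φh : Polynomial ℝ) (hφh : φh = C ((2:ℝ)⁻¹) * (φ ((q:ℤ) + 1) - θ (q:ℤ)))
    (p : ℕ) (hp : 1 ≤ p)
    (v : ℤ → ℝ)
    (hv_supp : ∀ n : ℤ, (n < 0 ∨ (p:ℤ) < n) → v n = 0)
    (hv0 : v 0 ≠ 0) (hvp : v (p:ℤ) ≠ 0)
    (J1 : ℝ → ℝ)
    (hJ1 : ∀ x : ℝ, J1 x = -(1 / a 0) * ∑ k ∈ Finset.range (p + 1), v (k : ℤ) *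
      ((φ (q:ℤ)).eval x * ((θ (k:ℤ)).eval x) ^ 2
        + 2 * φh.eval x * (θ (k:ℤ)).eval x * (φ (k:ℤ)).eval x
        - (θ ((q:ℤ) + 1)).eval x * ((φ (k:ℤ)).eval x) ^ 2))
    (μ : ℝ) (hΔμ : (Δl.eval μ) ^ 2 = 1) (hφqμ : (φ (q:ℤ)).eval μ = 0) :
    J1 μ = (θ ((q:ℤ) + 1)).eval μ / a 0
      * ∑ k ∈ Finset.Icc 1 p, v (k : ℤ) * ((φ (k:ℤ)).eval μ) ^ 2 := by
  -- Wronskian identity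
  have key : ∀ m : ℕ, C (a (m:ℤ)) * (θ (m:ℤ) * φ ((m:ℤ)+1) - θ ((m:ℤ)+1) * φ (m:ℤ))
      = C (a 0) := by
    intro m
    induction m with
    | zero => simp [hθ0, hθ1, hφ0, hφ1]
    | succ m IH =>
      have h1 := hθ_rec ((m:ℤ)+1)
      have h2 := hφ_rec ((m:ℤ)+1)
      simp only [add_sub_cancel_right] at h1 h2
      push_cast
      linear_combination θ ((m:ℤ)+1) * h2 - φ ((m:ℤ)+1) * h1 + IH
  have haq : a (q:ℤ) = a 0 := by
    have := ha_per 0; simpa using this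
  have hwr : a 0 * ((θ (q:ℤ)).eval μ * (φ ((q:ℤ)+1)).eval μ
      - (θ ((q:ℤ)+1)).eval μ * (φ (q:ℤ)).eval μ) = a 0 := by
    have := congrArg (Polynomial.eval μ) (key q)
    simpa [haq] using this
  have ha0 : a 0 ≠ 0 := ne_of_gt (ha_pos 0)
  have hθφ : (θ (q:ℤ)).eval μ * (φ ((q:ℤ)+1)).eval μ = 1 := by
    rw [hφqμ] at hwr
    exact mul_left_cancel₀ ha0 (by linarith)
  -- φh vanishes at μ
  have hφhμ : φh.eval μ = 0 := by
    have hsq : (φh.eval μ) ^ 2 = 0 := by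
      have hΔ : Δl.eval μ = 2⁻¹ * ((φ ((q:ℤ)+1)).eval μ + (θ (q:ℤ)).eval μ) := by
        simp [hΔl]
      have hφhe : φh.eval μ = 2⁻¹ * ((φ ((q:ℤ)+1)).eval μ - (θ (q:ℤ)).eval μ) := by
        simp [hφh]
      rw [hφhe]
      rw [hΔ] at hΔμ
      nlinarith [hθφ]
    exact pow_eq_zero_iff (n := 2) (by norm_num) |>.mp hsq
  -- compute J1 μ
  rw [hJ1, hφqμ, hφhμ]
  have hsum : ∑ k ∈ Finset.range (p + 1), v (k : ℤ) *
      (0 * ((θ (k:ℤ)).eval μ) ^ 2 + 2 * 0 * (θ (k:ℤ)).eval μ * (φ (k:ℤ)).eval μ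
        - (θ ((q:ℤ)+1)).eval μ * ((φ (k:ℤ)).eval μ) ^ 2)
      = -(θ ((q:ℤ)+1)).eval μ * ∑ k ∈ Finset.Icc 1 p, v (k : ℤ) * ((φ (k:ℤ)).eval μ) ^ 2 := by
    have hr : Finset.range (p + 1) = insert 0 (Finset.Icc 1 p) := by
      ext x; simp [Finset.mem_Icc, Finset.mem_range, Nat.lt_succ_iff]; omega
    rw [hr, Finset.sum_insert (by simp)]
    simp only [Nat.cast_zero, hφ0, Polynomial.eval_zero]
    rw [Finset.mul_sum]
    simp only [zero_mul, mul_zero, zero_add, zero_sub, ne_eq]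
    ring_nf
  rw [hsum]
  field_simp
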